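/- Let 0 < a ≤ 1/√3 and β ≥ -2√3 - 6·log(1 - 1/√3). Then for all x ∈ [0, 2π], exp(β·a² + 2a·cos x) ≥ 1/(1 + a² - 2a·cos x). -/

import Mathlib

set_option maxHeartbeats 1000000
open Real

lemma my_inv_le_log {y : ℝ} (hy : 0 < y) : 1 - 1/y ≤ Real.log y := by
  simpa [one_div] using Real.one_sub_inv_le_log_of_pos hy

lemma pade {y : ℝ} (hy : 1 ≤ y) : 2*(y-1)/(y+1) ≤ Real.log y := by
  have hy1 : (0:ℝ) < y + 1 := by linarith
  rw [div_le_iff₀ hy1]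
  set f : ℝ → ℝ := fun t => Real.log t * (t+1) - 2*(t-1) with hfdef
  have hmono : MonotoneOn f (Set.Ici (1:ℝ)) := by
    have hderiv : ∀ t ∈ interior (Set.Ici (1:ℝ)), 0 ≤ deriv f t := by
      intro t ht
      rw [interior_Ici] at ht
      have ht1 : (1:ℝ) < t := ht
      have ht0 : t ≠ 0 := by positivity
      have h1 : HasDerivAt f (t⁻¹ * (t+1) + Real.log t * 1 - 2) t := by
        have := ((Real.hasDerivAt_log ht0).mul ((hasDerivAt_id t).add_const 1)).sub
          (((hasDerivAt_id t).sub_const 1).const_mul 2)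
        exact this.congr_deriv (by simp)
      rw [h1.deriv]
      have := my_inv_le_log (by linarith : (0:ℝ) < t)
      have htinv : t⁻¹ * (t+1) = 1 + 1/t := by field_simp
      rw [htinv]
      linarith
    apply monotoneOn_of_deriv_nonneg (convex_Ici 1)
    · apply ContinuousOn.sub
      · exact (Real.continuousOn_log.mono (by intro t ht; simp at ht ⊢; intro h; linarith)).mul
          (by fun_prop)
      · fun_prop
    · intro t ht
      rw [interior_Ici] at ht
      exact (DifferentiableAt.sub ((Real.differentiableAt_log (ne_of_gt (lt_trans one_pos ht : (0:ℝ) < t))).mul (by fun_prop)) (by fun_prop)).differentiableWithinAt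
    · exact hderiv
  have := hmono (Set.mem_Ici.mpr le_rfl) (Set.mem_Ici.mpr hy) hy
  simp [hfdef] at this
  nlinarith [this]

-- √3 bounds
lemma sqrt3_lb : (1.7320508 : ℝ) < Real.sqrt 3 := by
  have h : (1.7320508 : ℝ) = Real.sqrt (1.7320508^2) := by
    rw [Real.sqrt_sq]; norm_num
  rw [h]
  apply Real.sqrt_lt_sqrt (by positivity)
  norm_num

lemma sqrt3_ub : Real.sqrt 3 < (1.7320509 : ℝ) := by
  have h : (1.7320509 : ℝ) = Real.sqrt (1.7320509^2) := by
    rw [Real.sqrt_sq]; norm_num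
  rw [h]
  apply Real.sqrt_lt_sqrt (by norm_num)
  norm_num

-- exp(0.8) ≤ (10/9)^8
lemma exp08 : Real.exp 0.8 ≤ (10/9:ℝ)^8 := by
  have h1 : Real.exp 0.1 ≤ 10/9 := by
    have hme : Real.exp 0.1 * Real.exp (-0.1) = 1 := by
      rw [← Real.exp_add]; norm_num
    have h := Real.add_one_le_exp (-0.1 : ℝ)
    nlinarith [Real.exp_pos (0.1:ℝ), Real.exp_pos (-0.1:ℝ)]
  calc Real.exp 0.8 = Real.exp 0.1 ^ (8:ℕ) := by
        rw [← Real.exp_nat_mul]; norm_num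
    _ ≤ (10/9:ℝ)^8 := by
        apply pow_le_pow_left₀ (Real.exp_pos _).le h1

-- Taylor lower bound for exp(0.883)
lemma exp0883 : (2.3661 : ℝ) ≤ Real.exp 0.883 := by
  have h := Real.sum_le_exp_of_nonneg (by norm_num : (0:ℝ) ≤ 0.883) 6
  refine le_trans ?_ h
  simp [Finset.sum_range_succ, Nat.factorial]
  norm_num

-- log((3+√3)/2) bounds
lemma logV_lb : (0.8:ℝ) ≤ Real.log ((3 + Real.sqrt 3)/2) := by
  rw [Real.le_log_iff_exp_le (by positivity)]
  have := sqrt3_lb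
  calc Real.exp 0.8 ≤ (10/9:ℝ)^8 := exp08
    _ ≤ (3 + Real.sqrt 3)/2 := by nlinarith

lemma logV_ub : Real.log ((3 + Real.sqrt 3)/2) ≤ (0.883:ℝ) := by
  rw [Real.log_le_iff_le_exp (by positivity)]
  have := sqrt3_ub
  calc (3 + Real.sqrt 3)/2 ≤ (2.3661:ℝ) := by nlinarith
    _ ≤ Real.exp 0.883 := exp0883

-- log(1 - 1/√3) = - log((3+√3)/2)
lemma log_one_sub : Real.log (1 - 1/Real.sqrt 3) = - Real.log ((3 + Real.sqrt 3)/2) := by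
  have hv : (0:ℝ) < Real.sqrt 3 := by positivity
  have hv2 : Real.sqrt 3 ^ 2 = 3 := Real.sq_sqrt (by norm_num)
  have hmul : ((3 + Real.sqrt 3)/2) * (1 - 1/Real.sqrt 3) = 1 := by
    field_simp
    nlinarith
  have key : (1 - 1/Real.sqrt 3) = ((3 + Real.sqrt 3)/2)⁻¹ :=
    eq_inv_of_mul_eq_one_left (by linarith [hmul, mul_comm ((3 + Real.sqrt 3)/2) (1 - 1/Real.sqrt 3)] )
  rw [key, Real.log_inv]

-- region 1 polynomial inequality
lemma poly1 (a : ℝ) (h0 : 0 ≤ a) (h1 : a ≤ 1/3) :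
    1 ≤ (1-a)*(1 + (a + (2/3)*a^2) + (a + (2/3)*a^2)^2/2 + (a + (2/3)*a^2)^3/6
      + (a + (2/3)*a^2)^4/24) := by
  nlinarith [sq_nonneg a,
    mul_nonneg (pow_nonneg h0 2) (by linarith : (0:ℝ) ≤ 1/3 - a),
    mul_nonneg (pow_nonneg h0 3) (by linarith : (0:ℝ) ≤ 1/3 - a),
    mul_nonneg (pow_nonneg h0 4) (by linarith : (0:ℝ) ≤ 1/3 - a),
    mul_nonneg (pow_nonneg h0 5) (by linarith : (0:ℝ) ≤ 1/3 - a),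
    mul_nonneg (pow_nonneg h0 6) (by linarith : (0:ℝ) ≤ 1/3 - a),
    mul_nonneg (pow_nonneg h0 7) (by linarith : (0:ℝ) ≤ 1/3 - a),
    mul_nonneg (pow_nonneg h0 8) (by linarith : (0:ℝ) ≤ 1/3 - a)]

-- region 1 log bound
lemma log_lb_region1 (a : ℝ) (h0 : 0 < a) (h1 : a ≤ 1/3) :
    -(a + (2/3)*a^2) ≤ Real.log (1-a) := by
  have h1a : (0:ℝ) < 1 - a := by linarith
  rw [Real.le_log_iff_exp_le h1a]
  have hz0 : (0:ℝ) ≤ a + (2/3)*a^2 := by positivity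
  have htay : 1 + (a + (2/3)*a^2) + (a + (2/3)*a^2)^2/2 + (a + (2/3)*a^2)^3/6
      + (a + (2/3)*a^2)^4/24 ≤ Real.exp (a + (2/3)*a^2) := by
    have h := Real.sum_le_exp_of_nonneg hz0 5
    refine le_trans ?_ h
    simp [Finset.sum_range_succ, Nat.factorial]
  have hp := poly1 a h0.le h1
  have hQ : 1/(1-a) ≤ Real.exp (a + (2/3)*a^2) := by
    rw [div_le_iff₀ h1a]
    nlinarith [mul_le_mul_of_nonneg_right htay h1a.le]
  rw [Real.exp_neg, inv_le_comm₀ (Real.exp_pos _) h1a]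
  simpa [one_div] using hQ

lemma pade' {p q : ℝ} (hq : 0 < q) (hpq : q ≤ p) : 2*(p-q)/(p+q) ≤ Real.log (p/q) := by
  have hp0 : 0 < p := lt_of_lt_of_le hq hpq
  have hy : 1 ≤ p/q := (one_le_div hq).mpr hpq
  have h := pade hy
  have heq : 2*(p/q-1)/(p/q+1) = 2*(p-q)/(p+q) := by
    rw [div_eq_div_iff (ne_of_gt (by positivity : (0:ℝ) < p/q+1))
      (ne_of_gt (by positivity : (0:ℝ) < p+q))]
    field_simp
  rwa [heq] at h

theorem stmt_0 (a β : ℝ) (ha : 0 < a) (ha' : a ≤ 1 / Real.sqrt 3)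
    (hβ : β ≥ -2 * Real.sqrt 3 - 6 * Real.log (1 - 1 / Real.sqrt 3)) :
    ∀ x ∈ Set.Icc (0 : ℝ) (2 * Real.pi),
      Real.exp (β * a ^ 2 + 2 * a * Real.cos x) ≥ 1 / (1 + a ^ 2 - 2 * a * Real.cos x) := by
  intro x _
  have hv0 : (0:ℝ) < Real.sqrt 3 := by positivity
  have hv2 : Real.sqrt 3 ^ 2 = 3 := Real.sq_sqrt (by norm_num)
  have hvl := sqrt3_lb
  have hvu := sqrt3_ub
  have hL0 : Real.log (1 - 1/Real.sqrt 3) = - Real.log ((3 + Real.sqrt 3)/2) := log_one_sub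
  have hlV1 := logV_lb
  have hlV2 := logV_ub
  set v := Real.sqrt 3 with hvdef
  clear_value v
  have ha1 : a < 1 := by
    have : 1/v < 1 := by rw [div_lt_one hv0]; linarith
    linarith
  have h1a : (0:ℝ) < 1 - a := by linarith
  set c := Real.cos x with hcdef
  have hc1 : -1 ≤ c := Real.neg_one_le_cos x
  have hc2 : c ≤ 1 := Real.cos_le_one x
  clear_value c
  have hD : 0 < 1 + a^2 - 2*a*c := by nlinarith [sq_nonneg (1-a)]
  -- key1 : reduction to c = 1
  have key1 : 2*a + 2*Real.log (1-a) ≤ 2*a*c + Real.log (1 + a^2 - 2*a*c) := by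
    by_cases hcase : a ≤ 1 + c
    · -- case A : pade at p = D, q = (1-a)^2
      have hyd : (0:ℝ) < (1-a)^2 := by positivity
      have hpq : (1-a)^2 ≤ 1 + a^2 - 2*a*c := by
        nlinarith [mul_nonneg ha.le (by linarith : (0:ℝ) ≤ 1 - c)]
      have hp := pade' hyd hpq
      have hS : (0:ℝ) < (1 + a^2 - 2*a*c) + (1-a)^2 := by positivity
      have hnum : 2*((1 + a^2 - 2*a*c) - (1-a)^2) = 4*(a*(1-c)) := by ring
      rw [hnum] at hp
      have hS2 : (1 + a^2 - 2*a*c) + (1-a)^2 ≤ 2 := by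
        nlinarith [mul_nonneg ha.le (by linarith : (0:ℝ) ≤ 1 + c - a)]
      have hstep : 2*(a*(1-c)) ≤ 4*(a*(1-c))/((1 + a^2 - 2*a*c) + (1-a)^2) := by
        rw [le_div_iff₀ hS]
        nlinarith [mul_nonneg (mul_nonneg ha.le (by linarith : (0:ℝ) ≤ 1 - c))
          (by linarith : (0:ℝ) ≤ 2 - ((1 + a^2 - 2*a*c) + (1-a)^2))]
      have hlogy : Real.log ((1 + a^2 - 2*a*c)/(1-a)^2)
          = Real.log (1 + a^2 - 2*a*c) - 2*Real.log (1-a) := by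
        rw [Real.log_div (ne_of_gt hD) (ne_of_gt hyd), Real.log_pow]
        push_cast; ring
      rw [hlogy] at hp
      nlinarith [hp, hstep]
    · -- case B
      push_neg at hcase
      have hD1 : 1 ≤ 1 + a^2 - 2*a*c := by nlinarith
      have h1pa : (0:ℝ) < 1 + a := by linarith
      have hq := Real.log_le_sub_one_of_pos
        (show (0:ℝ) < (1+a)^2/(1 + a^2 - 2*a*c) by positivity)
      have he1 : (1+a)^2/(1 + a^2 - 2*a*c) - 1 = (2*a*(1+c))/(1 + a^2 - 2*a*c) := by
        rw [div_sub_one hD.ne']; congr 1; ring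
      have he2 : (2*a*(1+c))/(1 + a^2 - 2*a*c) ≤ 2*a*(1+c) :=
        div_le_self (by nlinarith) hD1
      have hlogsplit : Real.log ((1+a)^2/(1 + a^2 - 2*a*c))
          = 2*Real.log (1+a) - Real.log (1 + a^2 - 2*a*c) := by
        rw [Real.log_div (by positivity) (ne_of_gt hD), Real.log_pow]
        push_cast; ring
      -- second : 2 log(1+a) - 2a ≥ 2a + 2 log(1-a)
      have hp2 := pade' h1a (show (1:ℝ) - a ≤ 1 + a by linarith)
      have hnum2 : 2*((1+a) - (1-a))/((1+a) + (1-a)) = 2*a := by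
        ring
      rw [hnum2] at hp2
      have hl2 : Real.log ((1+a)/(1-a)) = Real.log (1+a) - Real.log (1-a) :=
        Real.log_div (ne_of_gt h1pa) (ne_of_gt h1a)
      rw [hl2] at hp2
      rw [hlogsplit, he1] at hq
      nlinarith [hq, he2, hp2]
  -- key2 : 0 ≤ β a^2 + 2a + 2 log(1-a)
  have key2 : 0 ≤ β*a^2 + 2*a + 2*Real.log (1-a) := by
    have hb1 : (4/3 : ℝ) ≤ β := by
      rw [hL0] at hβ; linarith
    rcases le_or_gt a (1/3) with hreg | hreg
    · -- region 1
      have hll := log_lb_region1 a ha hreg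
      nlinarith [mul_nonneg (by linarith : (0:ℝ) ≤ β - 4/3) (sq_nonneg a)]
    · -- region 2
      set s : ℝ := 1/v with hsdef
      have hs0 : 0 < s := by positivity
      have hsv : s = v/3 := by
        rw [hsdef, div_eq_div_iff hv0.ne' (by norm_num : (3:ℝ) ≠ 0)]
        nlinarith
      have hs2 : s^2 = 1/3 := by rw [hsv, div_pow, hv2]; norm_num
      have hsl : (0.5773502:ℝ) < s := by
        rw [hsdef, lt_div_iff₀ hv0]; nlinarith
      have hsu : s < (0.5773503:ℝ) := by
        rw [hsdef, div_lt_iff₀ hv0]; nlinarith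
      have hsa : a ≤ s := ha'
      have h1s : 0 < 1 - s := by linarith
      clear_value s
      set L := Real.log (1 - s) with hLdef
      have hβ' : β ≥ -2*v - 6*L := hβ
      have hLu : L ≤ -0.8 := by rw [hL0]; linarith
      have hLl : -0.883 ≤ L := by rw [hL0]; linarith
      clear_value L
      set C : ℝ := -2*v - 6*L with hCdef
      have hbC : C ≤ β := hβ'
      have hCu : C ≤ 1.834 := by rw [hCdef]; linarith
      have hid : C*(1/3) + 2*s + 2*L = 0 := by
        rw [hCdef, hsv]; ring
      clear_value C
      -- pade at p = 1-a, q = 1-s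
      have hp := pade' h1s (show (1:ℝ) - s ≤ 1 - a by linarith)
      have hden : (0:ℝ) < 2 - a - s := by linarith
      have hnum3 : 2*((1-a) - (1-s)) = 4*(s-a)/2 := by ring
      have heq3 : 2*((1-a) - (1-s))/((1-a) + (1-s)) = 4*(s-a)/(2*(2-a-s)) := by
        rw [div_eq_div_iff (by linarith : (0:ℝ) < (1-a)+(1-s)).ne' (by linarith : (0:ℝ) < 2*(2-a-s)).ne']
        ring
      rw [heq3] at hp
      have hl : Real.log ((1-a)/(1-s)) = Real.log (1-a) - L := by
        rw [Real.log_div (ne_of_gt h1a) (ne_of_gt h1s), hLdef]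
      rw [hl] at hp
      -- final algebra
      have hlast : 0 ≤ 2 - C*(2-a-s) := by
        nlinarith [mul_le_mul_of_nonneg_right hCu hden.le]
      have hnn : 0 ≤ (s-a)*(s+a)*(2 - C*(2-a-s)) :=
        mul_nonneg (mul_nonneg (by linarith) (by linarith)) hlast
      have hfac : (C*(a^2-1/3) + 2*(a-s))*(2-a-s) + 4*(s-a)
          = (s-a)*(s+a)*(2 - C*(2-a-s)) := by
        have h13 : (1/3:ℝ) = s^2 := hs2.symm
        rw [h13]; ring
      have hE : 0 ≤ C*(a^2-1/3) + 2*(a-s) + 4*(s-a)/(2*(2-a-s))*2 := by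
        have hrw : C*(a^2-1/3) + 2*(a-s) + 4*(s-a)/(2*(2-a-s))*2
            = ((C*(a^2-1/3) + 2*(a-s))*(2-a-s) + 4*(s-a))/(2-a-s) := by
          field_simp
        rw [hrw]
        apply div_nonneg _ hden.le
        rw [hfac]
        exact hnn
      have hba : C*a^2 ≤ β*a^2 := mul_le_mul_of_nonneg_right hbC (sq_nonneg a)
      linarith [hE, hp, hid, hba]
  -- assemble
  rw [ge_iff_le, div_le_iff₀ hD]
  have hexp : Real.exp (β*a^2 + 2*a*c) * (1 + a^2 - 2*a*c)
      = Real.exp (β*a^2 + 2*a*c + Real.log (1 + a^2 - 2*a*c)) := by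
    conv_rhs => rw [Real.exp_add, Real.exp_log hD]
  rw [hexp]
  have h1 : 0 ≤ β*a^2 + 2*a*c + Real.log (1 + a^2 - 2*a*c) := by linarith
  calc (1:ℝ) = Real.exp 0 := Real.exp_zero.symm
    _ ≤ _ := Real.exp_le_exp.mpr h1
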